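/- Let A be a symmetric integer matrix, W = [e, Ae, …, A^{n−1}e], p an odd prime, and τ ≥ 1. Suppose rank of W mod p is n−1 and p^τ divides det W, and suppose z₀ is an integer vector with z₀ ≢ 0 (mod p) and Wᵀ z₀ ≡ 0 (mod p^τ). Then the set M = {z ∈ (ℤ/p^τℤ)^n : Wᵀ z = 0} is a free ℤ/p^τℤ-module of rank 1 with basis {z₀}, and consequently there exists an integer λ₀ with A z₀ ≡ λ₀ z₀ (mod p^τ). -/

import Mathlib

open Matrix

/-- The walk matrix `[e, Ae, …, A^{n-1}e]` of a square matrix `A`. -/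
noncomputable def walkMatrix {n : ℕ} {R : Type*} [CommRing R]
    (A : Matrix (Fin n) (Fin n) R) : Matrix (Fin n) (Fin n) R :=
  Matrix.of fun i j => ((A ^ (j : ℕ)) *ᵥ (fun _ => 1)) i

lemma cast_mulVec {n m : ℕ} (M : Matrix (Fin n) (Fin n) ℤ) (x : Fin n → ℤ) :
    (M.map (Int.cast : ℤ → ZMod m)) *ᵥ (fun i => ((x i : ZMod m))) =
      fun i => (((M *ᵥ x) i : ZMod m)) := by
  funext i
  simp [Matrix.mulVec, dotProduct, Matrix.map_apply]

/-- mod-p kernel is spanned by z₀ -/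
lemma modp_span {n p : ℕ} (hp : p.Prime)
    (W : Matrix (Fin n) (Fin n) ℤ)
    (hrank : (W.map (Int.cast : ℤ → ZMod p)).rank = n - 1)
    (z₀ : Fin n → ℤ) (hz₀p : ¬ (∀ i, (p : ℤ) ∣ z₀ i))
    (hz₀ : ∀ i, (p : ℤ) ∣ (Wᵀ *ᵥ z₀) i)
    (y : Fin n → ℤ) (hy : ∀ i, (p : ℤ) ∣ (Wᵀ *ᵥ y) i) :
    ∃ d : ℤ, ∀ i, (p : ℤ) ∣ (y i - d * z₀ i) := by
  haveI : Fact p.Prime := ⟨hp⟩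
  rcases Nat.eq_zero_or_pos n with hn | hn
  · subst hn; exact ⟨0, fun i => i.elim0⟩
  set B : Matrix (Fin n) (Fin n) (ZMod p) := (Wᵀ).map (Int.cast : ℤ → ZMod p) with hB
  have hrankB : B.rank = n - 1 := by
    rw [hB, Matrix.transpose_map, Matrix.rank_transpose, hrank]
  have hker : Module.finrank (ZMod p) (LinearMap.ker B.mulVecLin) = 1 := by
    have h1 := LinearMap.finrank_range_add_finrank_ker B.mulVecLin
    have h2 : Module.finrank (ZMod p) (Fin n → ZMod p) = n := Module.finrank_fin_fun _
    have h3 : Module.finrank (ZMod p) (LinearMap.range B.mulVecLin) = n - 1 := hrankB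
    omega
  -- z₀ bar
  set zb : Fin n → ZMod p := fun i => ((z₀ i : ZMod p)) with hzb
  have hmem : ∀ (v : Fin n → ℤ), (∀ i, (p : ℤ) ∣ (Wᵀ *ᵥ v) i) →
      (fun i => ((v i : ZMod p))) ∈ LinearMap.ker B.mulVecLin := by
    intro v hv
    rw [LinearMap.mem_ker]
    show B *ᵥ _ = 0
    rw [hB, cast_mulVec]
    funext i
    show (((Wᵀ *ᵥ v) i : ℤ) : ZMod p) = 0
    rw [ZMod.intCast_zmod_eq_zero_iff_dvd]
    exact_mod_cast hv i
  have hzmem := hmem z₀ hz₀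
  have hzne : zb ≠ 0 := by
    intro h
    apply hz₀p
    intro i
    have h2 : ((z₀ i : ℤ) : ZMod p) = 0 := congrFun h i
    exact_mod_cast (ZMod.intCast_zmod_eq_zero_iff_dvd _ p).mp h2
  set v0 : LinearMap.ker B.mulVecLin := ⟨zb, hzmem⟩ with hv0
  have hv0ne : v0 ≠ 0 := by
    intro h
    exact hzne (congrArg Subtype.val h)
  have hspan : Submodule.span (ZMod p) {v0} = ⊤ :=
    (finrank_eq_one_iff_of_nonzero v0 hv0ne).mp hker
  have hymem := hmem y hy
  have : (⟨fun i => ((y i : ZMod p)), hymem⟩ : LinearMap.ker B.mulVecLin) ∈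
      Submodule.span (ZMod p) {v0} := by rw [hspan]; trivial
  obtain ⟨db, hdb⟩ := Submodule.mem_span_singleton.mp this
  obtain ⟨d, rfl⟩ := ZMod.intCast_surjective db
  refine ⟨d, fun i => ?_⟩
  have h5 : ((d : ZMod p) • zb) = fun i => ((y i : ℤ) : ZMod p) :=
    congrArg Subtype.val hdb
  have h6 := congrFun h5 i
  simp only [Pi.smul_apply, smul_eq_mul, hzb] at h6
  have h7 : ((y i - d * z₀ i : ℤ) : ZMod p) = 0 := by
    push_cast
    rw [← h6]
    ring
  exact_mod_cast (ZMod.intCast_zmod_eq_zero_iff_dvd _ p).mp h7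

/-- lifting to p^k -/
lemma span_pow {n p : ℕ} (hp : p.Prime) (τ : ℕ) (hτ : 1 ≤ τ)
    (W : Matrix (Fin n) (Fin n) ℤ)
    (hrank : (W.map (Int.cast : ℤ → ZMod p)).rank = n - 1)
    (z₀ : Fin n → ℤ) (hz₀p : ¬ (∀ i, (p : ℤ) ∣ z₀ i))
    (hWz₀ : ∀ i, (p : ℤ) ^ τ ∣ (Wᵀ *ᵥ z₀) i) :
    ∀ k, k ≤ τ → ∀ x : Fin n → ℤ, (∀ i, (p : ℤ) ^ k ∣ (Wᵀ *ᵥ x) i) →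
      ∃ c : ℤ, ∀ i, (p : ℤ) ^ k ∣ (x i - c * z₀ i) := by
  have hz1 : ∀ i, (p : ℤ) ∣ (Wᵀ *ᵥ z₀) i := fun i =>
    dvd_trans (dvd_pow_self (p : ℤ) (by omega)) (hWz₀ i)
  intro k
  induction k with
  | zero => intro _ x _; exact ⟨0, fun i => by simp⟩
  | succ k ih =>
    intro hk x hx
    obtain ⟨c, hc⟩ := ih (by omega) x
      (fun i => dvd_trans (pow_dvd_pow _ (Nat.le_succ k)) (hx i))
    choose y hy using fun i => (hc i)
    -- Wᵀ y ≡ 0 mod p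
    have key : ∀ i, (p : ℤ) ^ k * (Wᵀ *ᵥ y) i = (Wᵀ *ᵥ x) i - c * (Wᵀ *ᵥ z₀) i := by
      intro i
      simp only [Matrix.mulVec, dotProduct, Matrix.transpose_apply,
        Finset.mul_sum, ← Finset.sum_sub_distrib]
      refine Finset.sum_congr rfl fun j _ => ?_
      linear_combination (-(W j i)) * hy j
    have hWy : ∀ i, (p : ℤ) ∣ (Wᵀ *ᵥ y) i := by
      intro i
      have h1 : (p : ℤ) ^ (k+1) ∣ (p : ℤ) ^ k * (Wᵀ *ᵥ y) i := by
        rw [key i]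
        exact dvd_sub (hx i) (Dvd.dvd.mul_left
          (dvd_trans (pow_dvd_pow _ (by omega)) (hWz₀ i)) c)
      rw [pow_succ] at h1
      have hpk : (p : ℤ) ^ k ≠ 0 := pow_ne_zero _ (by exact_mod_cast hp.ne_zero)
      exact (mul_dvd_mul_iff_left hpk).mp h1
    obtain ⟨d, hd⟩ := modp_span hp W hrank z₀ hz₀p hz1 y hWy
    refine ⟨c + d * (p : ℤ) ^ k, fun i => ?_⟩
    have heq : x i - (c + d * (p:ℤ)^k) * z₀ i = (p:ℤ)^k * (y i - d * z₀ i) := by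
      linear_combination hy i
    rw [heq, pow_succ]
    exact mul_dvd_mul_left _ (hd i)

theorem kernel_rank_one_and_eigenvector_mod
    {n : ℕ} (p : ℕ) (hp : p.Prime) (hodd : Odd p) (τ : ℕ) (hτ : 1 ≤ τ)
    (A : Matrix (Fin n) (Fin n) ℤ) (hsymm : Aᵀ = A)
    (W : Matrix (Fin n) (Fin n) ℤ) (hW : W = walkMatrix A)
    (hrank : (W.map (Int.cast : ℤ → ZMod p)).rank = n - 1)
    (hdet : (p : ℤ) ^ τ ∣ W.det)
    (z₀ : Fin n → ℤ) (hz₀p : ¬ (∀ i, (p : ℤ) ∣ z₀ i))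
    (hWz₀ : ∀ i, (p : ℤ) ^ τ ∣ (Wᵀ *ᵥ z₀) i) :
    (∃ b : Module.Basis (Fin 1) (ZMod (p ^ τ))
        (LinearMap.ker (Wᵀ.map (Int.cast : ℤ → ZMod (p ^ τ))).mulVecLin),
      (b 0 : Fin n → ZMod (p ^ τ)) = fun i => ((z₀ i : ZMod (p ^ τ)))) ∧
    ∃ lam : ℤ, ∀ i, (p : ℤ) ^ τ ∣ (A *ᵥ z₀ - lam • z₀) i := by
  have hp' : Prime (p : ℤ) := Nat.prime_iff_prime_int.mp hp
  -- membership in the kernel over ZMod (p^τ) ↔ integer divisibility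
  have hker_int : ∀ v : Fin n → ℤ,
      (∀ i, (p : ℤ) ^ τ ∣ (Wᵀ *ᵥ v) i) ↔
        (fun i => ((v i : ZMod (p ^ τ)))) ∈
          LinearMap.ker (Wᵀ.map (Int.cast : ℤ → ZMod (p ^ τ))).mulVecLin := by
    intro v
    rw [LinearMap.mem_ker, Matrix.mulVecLin_apply, cast_mulVec]
    constructor
    · intro h
      funext i
      show (((Wᵀ *ᵥ v) i : ℤ) : ZMod (p ^ τ)) = 0
      rw [ZMod.intCast_zmod_eq_zero_iff_dvd]
      push_cast
      exact h i
    · intro h i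
      have h2 : (((Wᵀ *ᵥ v) i : ℤ) : ZMod (p ^ τ)) = 0 := congrFun h i
      rw [ZMod.intCast_zmod_eq_zero_iff_dvd] at h2
      push_cast at h2
      exact h2
  -- a unit coordinate of z₀
  push_neg at hz₀p
  obtain ⟨i₀, hi₀⟩ := hz₀p
  have hz₀p' : ¬ (∀ i, (p : ℤ) ∣ z₀ i) := fun h => hi₀ (h i₀)
  have hzero : (((p : ℤ) ^ τ : ℤ) : ZMod (p ^ τ)) = 0 := by
    rw [ZMod.intCast_zmod_eq_zero_iff_dvd]
    push_cast
    rfl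
  obtain ⟨a, b, hab⟩ : IsCoprime (z₀ i₀) ((p : ℤ) ^ τ) :=
    ((hp'.coprime_iff_not_dvd.mpr hi₀).symm).pow_right
  have hunit : (a : ZMod (p ^ τ)) * ((z₀ i₀ : ℤ) : ZMod (p ^ τ)) = 1 := by
    have h := congrArg (Int.cast : ℤ → ZMod (p ^ τ)) hab
    push_cast at h hzero
    rw [hzero, mul_zero, add_zero] at h
    push_cast
    exact h
  have hcancel : ∀ c : ZMod (p ^ τ), c * ((z₀ i₀ : ℤ) : ZMod (p ^ τ)) = 0 → c = 0 := by
    intro c hc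
    have := congrArg (· * (a : ZMod (p ^ τ))) hc
    simp only [zero_mul] at this
    rw [mul_assoc, mul_comm ((z₀ i₀ : ℤ) : ZMod (p ^ τ)), hunit, mul_one] at this
    exact this
  set zb : Fin n → ZMod (p ^ τ) := fun i => ((z₀ i : ZMod (p ^ τ))) with hzb
  have hzmem : zb ∈ LinearMap.ker (Wᵀ.map (Int.cast : ℤ → ZMod (p ^ τ))).mulVecLin :=
    (hker_int z₀).mp hWz₀
  set v0 : LinearMap.ker (Wᵀ.map (Int.cast : ℤ → ZMod (p ^ τ))).mulVecLin :=
    ⟨zb, hzmem⟩ with hv0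
  -- every kernel element is a multiple of v0
  have hsurj : ∀ w : LinearMap.ker (Wᵀ.map (Int.cast : ℤ → ZMod (p ^ τ))).mulVecLin,
      ∃ c : ℤ, (c : ZMod (p ^ τ)) • v0 = w := by
    intro w
    choose x hx using fun i => ZMod.intCast_surjective ((w : Fin n → ZMod (p ^ τ)) i)
    have hxker : ∀ i, (p : ℤ) ^ τ ∣ (Wᵀ *ᵥ x) i := by
      apply (hker_int x).mpr
      have hfun : (fun i => ((x i : ZMod (p ^ τ)))) = (w : Fin n → ZMod (p ^ τ)) :=
        funext hx
      rw [hfun]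
      exact w.2
    obtain ⟨c, hc⟩ := span_pow hp τ hτ W hrank z₀ hz₀p' hWz₀ τ le_rfl x hxker
    refine ⟨c, Subtype.ext (funext fun i => ?_)⟩
    have h2 : ((x i - c * z₀ i : ℤ) : ZMod (p ^ τ)) = 0 := by
      rw [ZMod.intCast_zmod_eq_zero_iff_dvd]
      push_cast
      exact hc i
    push_cast at h2
    have : ((c : ℤ) : ZMod (p ^ τ)) * ((z₀ i : ℤ) : ZMod (p ^ τ)) = ((x i : ℤ) : ZMod (p ^ τ)) := by
      linear_combination -h2
    show ((c : ℤ) : ZMod (p ^ τ)) * zb i = (w : Fin n → ZMod (p ^ τ)) i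
    rw [hzb]
    rw [← hx i]
    exact this
  -- basis
  have hli : LinearIndependent (ZMod (p ^ τ)) (fun _ : Fin 1 => v0) := by
    rw [Fintype.linearIndependent_iff]
    intro g hg i
    have h1 : g 0 • v0 = 0 := by
      rw [← hg]
      simp [Fin.sum_univ_one]
    have h2 : g 0 * zb i₀ = 0 := by
      have := congrArg (fun w : LinearMap.ker (Wᵀ.map (Int.cast : ℤ → ZMod (p ^ τ))).mulVecLin
        => (w : Fin n → ZMod (p ^ τ)) i₀) h1
      simpa using this
    have h3 : g 0 = 0 := hcancel _ h2
    have : i = 0 := Subsingleton.elim i 0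
    rw [this]
    exact h3
  have hsp : ⊤ ≤ Submodule.span (ZMod (p ^ τ)) (Set.range fun _ : Fin 1 => v0) := by
    intro w _
    rw [Set.range_const]
    obtain ⟨c, hc⟩ := hsurj w
    exact Submodule.mem_span_singleton.mpr ⟨(c : ZMod (p ^ τ)), hc⟩
  refine ⟨⟨Module.Basis.mk hli hsp, ?_⟩, ?_⟩
  · rw [Module.Basis.mk_apply]
  -- eigenvector part
  · subst hW
    set e : Fin n → ℤ := fun _ => 1 with he
    have hcol : ∀ (v : Fin n → ℤ) (i : Fin n),
        ((walkMatrix A)ᵀ *ᵥ v) i = ((A ^ (i : ℕ)) *ᵥ e) ⬝ᵥ v := by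
      intro v i
      simp [walkMatrix, Matrix.mulVec, dotProduct, he]
    -- the linear functional M ↦ (M e) ⬝ z₀
    let φ : Matrix (Fin n) (Fin n) ℤ →ₗ[ℤ] ℤ :=
      { toFun := fun M => (M *ᵥ e) ⬝ᵥ z₀
        map_add' := fun M N => by
          rw [Matrix.add_mulVec, add_dotProduct]
        map_smul' := fun c M => by
          rw [Matrix.smul_mulVec, smul_dotProduct]
          rfl }
    have hsmall : ∀ k : ℕ, k < n → (p : ℤ) ^ τ ∣ φ (A ^ k) := by
      intro k hk
      have := hWz₀ ⟨k, hk⟩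
      rwa [hcol z₀ ⟨k, hk⟩] at this
    have hbig : (p : ℤ) ^ τ ∣ φ (A ^ n) := by
      have hCH := Matrix.aeval_self_charpoly A
      rw [Polynomial.aeval_eq_sum_range] at hCH
      have hdeg : A.charpoly.natDegree = n := by
        rw [Matrix.charpoly_natDegree_eq_dim]; simp
      rw [hdeg, Finset.sum_range_succ] at hCH
      have hmon : A.charpoly.coeff n = 1 := by
        have h := A.charpoly_monic.coeff_natDegree
        rwa [hdeg] at h
      rw [hmon, one_smul] at hCH
      have hAn : A ^ n = -∑ i ∈ Finset.range n, A.charpoly.coeff i • A ^ i := by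
        rw [eq_neg_iff_add_eq_zero, add_comm]
        exact hCH
      rw [hAn, map_neg, map_sum, dvd_neg]
      apply Finset.dvd_sum
      intro i hi
      rw [_root_.map_smul, smul_eq_mul]
      exact (hsmall i (Finset.mem_range.mp hi)).mul_left _
    have hall : ∀ k : ℕ, k ≤ n → (p : ℤ) ^ τ ∣ φ (A ^ k) := by
      intro k hk
      rcases lt_or_eq_of_le hk with h | h
      · exact hsmall k h
      · rw [h]; exact hbig
    have hAx : ∀ i, (p : ℤ) ^ τ ∣ ((walkMatrix A)ᵀ *ᵥ (A *ᵥ z₀)) i := by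
      intro i
      rw [hcol]
      have h2 : ((A ^ (i : ℕ)) *ᵥ e) ᵥ* A = A *ᵥ ((A ^ (i : ℕ)) *ᵥ e) := by
        have h3 := Matrix.vecMul_transpose A ((A ^ (i : ℕ)) *ᵥ e)
        rwa [hsymm] at h3
      have h1 : ((A ^ (i : ℕ)) *ᵥ e) ⬝ᵥ (A *ᵥ z₀) = ((A ^ ((i : ℕ) + 1)) *ᵥ e) ⬝ᵥ z₀ := by
        rw [Matrix.dotProduct_mulVec, h2, Matrix.mulVec_mulVec, ← pow_succ']
      rw [h1]
      exact hall ((i : ℕ) + 1) i.2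
    obtain ⟨lam, hlam⟩ := span_pow hp τ hτ (walkMatrix A) hrank z₀ hz₀p' hWz₀ τ le_rfl
      (A *ᵥ z₀) hAx
    refine ⟨lam, fun i => ?_⟩
    simpa [Pi.sub_apply, Pi.smul_apply, smul_eq_mul] using hlam i
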